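/- For a ∈ ℝ₊ⁿ with all coordinates strictly positive, the set Γ_a = {x ∈ ℝ₊ⁿ : ⟨x, a⟩ ≥ 1} is indecomposable in 𝒞: whenever Γ_a = K₁ + K₂ with K₁, K₂ ∈ 𝒞 nonempty, at least one of K₁, K₂ is homothetic to Γ_a, i.e., of the form c·Γ_a + x with c ≥ 0 and x ∈ ℝ₊ⁿ (where 0·Γ_a + x is interpreted as the translated orthant x + ℝ₊ⁿ). -/

import Mathlib

open Pointwise

def orthant (n : ℕ) : Set (Fin n → ℝ) := {x | ∀ i, 0 ≤ x i}

def IsComplete' {n : ℕ} (Γ : Set (Fin n → ℝ)) : Prop :=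
  ∀ a ∈ Γ, ∀ x ∈ orthant n, a + x ∈ Γ

/-- membership in the class 𝒞 -/
def MemC {n : ℕ} (Γ : Set (Fin n → ℝ)) : Prop :=
  Γ ⊆ orthant n ∧ Γ.Nonempty ∧ IsClosed Γ ∧ Convex ℝ Γ ∧ IsComplete' Γ

/-- `K` is homothetic to `B`: `K = c•B + x` with `c ≥ 0`, `x` in the orthant, where
the degenerate case `c = 0` is interpreted as the translated orthant `x + ℝ₊ⁿ`. -/
def Homothetic {n : ℕ} (K B : Set (Fin n → ℝ)) : Prop :=
  (∃ c : ℝ, 0 < c ∧ ∃ x ∈ orthant n, K = c • B + {x}) ∨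
    (∃ x ∈ orthant n, K = {x} + orthant n)

/-- auxiliary: the linear functional `x ↦ ⟨x, a⟩`. -/
noncomputable def fd {n : ℕ} (a x : Fin n → ℝ) : ℝ := ∑ i, x i * a i

lemma fd_add {n : ℕ} (a p q : Fin n → ℝ) : fd a (p + q) = fd a p + fd a q := by
  simp only [fd, Pi.add_apply, add_mul]
  exact Finset.sum_add_distrib

lemma fd_smul {n : ℕ} (a : Fin n → ℝ) (c : ℝ) (y : Fin n → ℝ) :
    fd a (c • y) = c * fd a y := by
  simp only [fd, Pi.smul_apply, smul_eq_mul, Finset.mul_sum, mul_assoc]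

lemma fd_nonneg {n : ℕ} (a : Fin n → ℝ) (ha : ∀ i, 0 < a i) (x : Fin n → ℝ)
    (hx : x ∈ orthant n) : 0 ≤ fd a x :=
  Finset.sum_nonneg fun i _ => mul_nonneg (hx i) (ha i).le

/-- for a strictly positive weight `a`, the half-space diagram
`Γ_a = {x ∈ ℝ₊ⁿ : ⟨x,a⟩ ≥ 1}` is indecomposable in 𝒞. -/
theorem Gamma_a_indecomposable {n : ℕ} (a : Fin n → ℝ) (ha : ∀ i, 0 < a i)
    (K₁ K₂ : Set (Fin n → ℝ)) (h₁ : MemC K₁) (h₂ : MemC K₂)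
    (hsum : {x | x ∈ orthant n ∧ 1 ≤ ∑ i, x i * a i} = K₁ + K₂) :
    Homothetic K₁ {x | x ∈ orthant n ∧ 1 ≤ ∑ i, x i * a i} ∨
      Homothetic K₂ {x | x ∈ orthant n ∧ 1 ≤ ∑ i, x i * a i} := by
  classical
  left
  have Gm : ∀ y : Fin n → ℝ, y ∈ K₁ + K₂ ↔ (y ∈ orthant n ∧ 1 ≤ fd a y) := by
    intro y
    rw [← hsum]
    exact Iff.rfl
  obtain ⟨p₀, hp₀⟩ := h₁.2.1
  obtain ⟨q₀, hq₀⟩ := h₂.2.1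
  rcases Nat.eq_zero_or_pos n with hn | hn
  · exfalso
    have hmem := (Gm (p₀ + q₀)).mp (Set.add_mem_add hp₀ hq₀)
    have h2 := hmem.2
    subst hn
    simp [fd] at h2
    linarith
  have hfn : Nonempty (Fin n) := Fin.pos_iff_nonempty.mp hn
  have hne₁ : (fd a '' K₁).Nonempty := ⟨fd a p₀, p₀, hp₀, rfl⟩
  have hne₂ : (fd a '' K₂).Nonempty := ⟨fd a q₀, q₀, hq₀, rfl⟩
  have hbdd : ∀ (K : Set (Fin n → ℝ)), K ⊆ orthant n → BddBelow (fd a '' K) := by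
    rintro K hK
    exact ⟨0, by rintro y ⟨x, hx, rfl⟩; exact fd_nonneg a ha x (hK hx)⟩
  set c₁ := sInf (fd a '' K₁) with hc₁def
  set c₂ := sInf (fd a '' K₂) with hc₂def
  have hc₁le : ∀ x ∈ K₁, c₁ ≤ fd a x := fun x hx => csInf_le (hbdd K₁ h₁.1) ⟨x, hx, rfl⟩
  have hc₂le : ∀ x ∈ K₂, c₂ ≤ fd a x := fun x hx => csInf_le (hbdd K₂ h₂.1) ⟨x, hx, rfl⟩
  have hc₁0 : 0 ≤ c₁ :=
    le_csInf hne₁ (by rintro y ⟨x, hx, rfl⟩; exact fd_nonneg a ha x (h₁.1 hx))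
  have hsum1 : ∀ p ∈ K₁, ∀ q ∈ K₂, 1 ≤ fd a p + fd a q := by
    intro p hp q hq
    have hm := (Gm (p + q)).mp (Set.add_mem_add hp hq)
    have := hm.2
    rwa [fd_add] at this
  have hkey : 1 - c₁ ≤ c₂ := by
    apply le_csInf hne₂
    rintro y ⟨q, hq, rfl⟩
    have h' : 1 - fd a q ≤ c₁ :=
      le_csInf hne₁ (by rintro z ⟨p, hp, rfl⟩; linarith [hsum1 p hp q hq])
    linarith
  rcases eq_or_lt_of_le hc₁0 with hc₁z | hc₁pos
  · -- c₁ = 0 : K₁ = {0} + orthant n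
    right
    refine ⟨0, fun i => le_refl 0, ?_⟩
    have h0 : (0 : Fin n → ℝ) ∈ K₁ := by
      rw [← h₁.2.2.1.closure_eq, Metric.mem_closure_iff]
      intro ε hε
      set α := Finset.univ.inf' Finset.univ_nonempty a with hα
      have hαpos : 0 < α := by
        rw [hα, Finset.lt_inf'_iff]
        exact fun i _ => ha i
      obtain ⟨y, ⟨x, hx, rfl⟩, hylt⟩ :=
        exists_lt_of_csInf_lt hne₁ (show sInf (fd a '' K₁) < ε * α by
          rw [← hc₁def, ← hc₁z]; positivity)
      refine ⟨x, hx, ?_⟩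
      rw [dist_zero_left, pi_norm_lt_iff hε]
      intro i
      have hxi : 0 ≤ x i := h₁.1 hx i
      rw [Real.norm_of_nonneg hxi]
      have h1 : x i * a i ≤ fd a x :=
        Finset.single_le_sum (fun j _ => mul_nonneg (h₁.1 hx j) (ha j).le)
          (Finset.mem_univ i)
      have h2 : α ≤ a i := Finset.inf'_le a (Finset.mem_univ i)
      have h3 : x i * a i < ε * a i := by
        calc x i * a i ≤ fd a x := h1
        _ < ε * α := hylt
        _ ≤ ε * a i := by nlinarith
      exact lt_of_mul_lt_mul_right h3 (ha i).le
    ext y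
    constructor
    · intro hy
      exact ⟨0, rfl, y, h₁.1 hy, by simp⟩
    · rintro ⟨z, hz, w, hw, rfl⟩
      simp only [Set.mem_singleton_iff] at hz
      subst hz
      simpa using h₁.2.2.2.2 0 h0 w hw
  · -- c₁ > 0 : K₁ = c₁ • Γ
    left
    refine ⟨c₁, hc₁pos, 0, fun i => le_refl 0, ?_⟩
    -- vertices
    set v : Fin n → (Fin n → ℝ) := fun i m => if m = i then (a i)⁻¹ else 0 with hv
    have hfv : ∀ i, fd a (v i) = 1 := by
      intro i
      simp only [fd, hv, ite_mul, zero_mul, Finset.sum_ite_eq', Finset.mem_univ, if_true]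
      exact inv_mul_cancel₀ (ha i).ne'
    have hvorth : ∀ i, v i ∈ orthant n := by
      intro i m
      simp only [hv]
      split
      · exact inv_nonneg.mpr (ha _).le
      · exact le_refl 0
    have hwK : ∀ i, c₁ • v i ∈ K₁ := by
      intro i
      have hvi : v i ∈ K₁ + K₂ := (Gm (v i)).mpr ⟨hvorth i, (hfv i).ge⟩
      obtain ⟨p, hp, q, hq, hpq0⟩ := hvi
      have hpq : p + q = v i := hpq0
      have h1 : fd a p + fd a q = 1 := by rw [← fd_add, hpq]; exact hfv i
      have hfp : fd a p = c₁ := by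
        have := hc₁le p hp
        have := hc₂le q hq
        linarith
      have pm0 : ∀ m, m ≠ i → p m = 0 := by
        intro m hm
        have hc := congrFun hpq m
        simp only [Pi.add_apply, hv, if_neg hm] at hc
        have := h₁.1 hp m
        have := h₂.1 hq m
        linarith
      have hpi : (∑ m, p m * a m) = p i * a i :=
        Finset.sum_eq_single i (fun b _ hb => by rw [pm0 b hb, zero_mul]) (by simp)
      have hpia : p i * a i = c₁ := by rw [← hpi]; exact hfp
      have hpeq : p = c₁ • v i := by
        funext m
        simp only [Pi.smul_apply, smul_eq_mul, hv]
        by_cases hm : m = i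
        · subst hm
          rw [if_pos rfl, ← hpia, mul_assoc, mul_inv_cancel₀ (ha m).ne', mul_one]
        · rw [pm0 m hm, if_neg hm, mul_zero]
      rw [← hpeq]
      exact hp
    have hK₁ : K₁ = c₁ • {x | x ∈ orthant n ∧ 1 ≤ ∑ i, x i * a i} := by
      ext y
      constructor
      · intro hy
        refine Set.mem_smul_set.mpr ⟨c₁⁻¹ • y, ⟨fun m => ?_, ?_⟩, ?_⟩
        · have h0 := h₁.1 hy m
          have h1 : (0:ℝ) ≤ c₁⁻¹ := inv_nonneg.mpr hc₁pos.le
          simp only [Pi.smul_apply, smul_eq_mul]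
          exact mul_nonneg h1 h0
        · show (1:ℝ) ≤ ∑ i, (c₁⁻¹ • y) i * a i
          have hy1 : c₁ ≤ fd a y := hc₁le y hy
          have : fd a (c₁⁻¹ • y) = c₁⁻¹ * fd a y := fd_smul a _ y
          have h2 : (1:ℝ) ≤ c₁⁻¹ * fd a y := by
            rw [← inv_mul_cancel₀ hc₁pos.ne']
            exact mul_le_mul_of_nonneg_left hy1 (inv_nonneg.mpr hc₁pos.le)
          calc (1:ℝ) ≤ c₁⁻¹ * fd a y := h2
          _ = fd a (c₁⁻¹ • y) := this.symm
          _ = ∑ i, (c₁⁻¹ • y) i * a i := rfl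
        · rw [smul_smul, mul_inv_cancel₀ hc₁pos.ne', one_smul]
      · intro hy
        obtain ⟨z, hz, rfl⟩ := Set.mem_smul_set.mp hy
        have hzorth : z ∈ orthant n := hz.1
        have hz2 : (1:ℝ) ≤ fd a z := hz.2
        have hy'orth : c₁ • z ∈ orthant n := fun m => by
          have := hzorth m
          simp only [Pi.smul_apply, smul_eq_mul]
          exact mul_nonneg hc₁pos.le this
        have hTdef : fd a (c₁ • z) = c₁ * fd a z := fd_smul a c₁ z
        set T := fd a (c₁ • z) with hT
        have hTc : c₁ ≤ T := by nlinarith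
        have hTpos : 0 < T := lt_of_lt_of_le hc₁pos hTc
        set μ : Fin n → ℝ := fun i => (c₁ • z) i * a i / T with hμ
        have hμ0 : ∀ i ∈ Finset.univ, (0:ℝ) ≤ μ i := by
          intro i _
          have h0 := hy'orth i
          simp only [hμ]
          exact div_nonneg (mul_nonneg h0 (ha i).le) hTpos.le
        have hμ1 : ∑ i, μ i = 1 := by
          simp only [hμ, div_eq_mul_inv, ← Finset.sum_mul]
          have hTsum : (∑ i, (c₁ • z) i * a i) = T := rfl
          rw [hTsum, mul_inv_cancel₀ hTpos.ne']
        have hsmem : ∑ i, μ i • (c₁ • v i) ∈ K₁ :=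
          h₁.2.2.2.1.sum_mem hμ0 hμ1 (fun i _ => hwK i)
        have hseq : ∑ i, μ i • (c₁ • v i) = (c₁ / T) • (c₁ • z) := by
          funext m
          simp only [Finset.sum_apply, Pi.smul_apply, smul_eq_mul, hv]
          rw [Finset.sum_eq_single m]
          · rw [if_pos rfl]
            simp only [hμ]
            field_simp [hTpos.ne', (ha m).ne']
            rfl
          · intro i _ him
            rw [if_neg (Ne.symm him), mul_zero, mul_zero]
          · simp
        have hres : c₁ • z = (∑ i, μ i • (c₁ • v i)) + (1 - c₁ / T) • (c₁ • z) := by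
          rw [hseq, ← add_smul]
          have hc : c₁ / T + (1 - c₁ / T) = 1 := by ring
          rw [hc, one_smul]
        have horth : (1 - c₁ / T) • (c₁ • z) ∈ orthant n := by
          intro m
          have hd1 : c₁ / T ≤ 1 := (div_le_one hTpos).mpr hTc
          simp only [Pi.smul_apply, smul_eq_mul]
          exact mul_nonneg (by linarith) (mul_nonneg hc₁pos.le (hzorth m))
        rw [hres]
        exact h₁.2.2.2.2 _ hsmem _ horth
    rw [hK₁]
    ext y
    simp [Set.add_singleton]
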